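/- Let G be the complete directed graph on the 2n + 1 vertices {s, x₁, y₁, …, xₙ, yₙ}, and for i ∈ {1,…,n} let eᵢ denote the edge (xᵢ, yᵢ). Let R be any finite sequence of edges of G containing no occurrence of any eᵢ, let T = (t₁, …, t_m) be a sequence over {1, …, n}, and let S be the concatenation R · (e_{t₁}) · R · (e_{t₂}) · ⋯ · R · (e_{t_m}) · R. If some permutation π of {1, …, n} is not a subsequence of T, then S does not contain the simple path (s, x_{π(1)}, y_{π(1)}, x_{π(2)}, y_{π(2)}, …, x_{π(n)}, y_{π(n)}); in particular, S is not a valid relaxation sequence for G. -/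

import Mathlib

/-- The vertex set `{s, x₁, y₁, …, xₙ, yₙ}` of size `2n + 1`: the source is `none`,
`xᵢ = some (Sum.inl i)` and `yᵢ = some (Sum.inr i)`. -/
abbrev Vtx (n : ℕ) := Option (Fin n ⊕ Fin n)

/-- The special edge `eᵢ = (xᵢ, yᵢ)`. -/
def specialEdge {n : ℕ} (i : Fin n) : Vtx n × Vtx n :=
  (some (Sum.inl i), some (Sum.inr i))

/-- `S` is a valid relaxation sequence for the complete directed graph on vertex
type `α` with source `s`: `S` contains (as a subsequence, in order but not
necessarily contiguously) the edge sequence of every simple path starting at `s`. -/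
def IsValidRelaxSeq {α : Type*} (s : α) (S : List (α × α)) : Prop :=
  ∀ p : List α, p ≠ [] → p.head? = some s → p.Nodup → (p.zip p.tail).Sublist S

/-- The simple path `(s, x_{π 1}, y_{π 1}, …, x_{π n}, y_{π n})`. -/
def permPath (n : ℕ) (π : Equiv.Perm (Fin n)) : List (Vtx n) :=
  none :: (List.ofFn fun i : Fin n =>
    [some (Sum.inl (π i)), some (Sum.inr (π i))]).flatten

/-- extract the special index of an edge, if any -/
def specIdx {n : ℕ} : Vtx n × Vtx n → Option (Fin n)
  | (some (Sum.inl i), some (Sum.inr j)) => if i = j then some i else none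
  | _ => none

lemma specIdx_special {n : ℕ} (i : Fin n) : specIdx (specialEdge i) = some i := by
  simp [specIdx, specialEdge]

lemma specIdx_eq_some {n : ℕ} {e : Vtx n × Vtx n} {k : Fin n}
    (h : specIdx e = some k) : e = specialEdge k := by
  obtain ⟨a, b⟩ := e
  match a, b with
  | some (Sum.inl i), some (Sum.inr j) =>
    simp only [specIdx] at h
    split at h
    · simp_all [specialEdge]
    · simp at h
  | none, _ => simp [specIdx] at h
  | some (Sum.inr _), _ => simp [specIdx] at h
  | some (Sum.inl _), none => simp [specIdx] at h
  | some (Sum.inl _), some (Sum.inl _) => simp [specIdx] at h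

lemma path_edges_sublist {n : ℕ} (l : List (Fin n)) (v : Vtx n) :
    (l.map specialEdge).Sublist
      (((v :: (l.map fun i => [some (Sum.inl i), some (Sum.inr i)]).flatten).zip
        ((l.map fun i => [some (Sum.inl i), some (Sum.inr i)]).flatten))) := by
  induction l generalizing v with
  | nil => exact List.nil_sublist _
  | cons i l ih =>
    simp only [List.map_cons, List.flatten_cons, List.cons_append, List.zip_cons_cons]
    refine List.Sublist.cons _ ?_
    exact (ih (some (Sum.inr i))).cons₂ _

lemma filterMap_specIdx_R {n : ℕ} {R : List (Vtx n × Vtx n)}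
    (hR : ∀ i : Fin n, specialEdge i ∉ R) : R.filterMap specIdx = [] := by
  rw [List.filterMap_eq_nil_iff]
  intro e he
  cases h : specIdx e with
  | none => rfl
  | some k => exact absurd (specIdx_eq_some h ▸ he) (hR k)


lemma filterMap_specIdx_S {n : ℕ} {R : List (Vtx n × Vtx n)}
    (hR : ∀ i : Fin n, specialEdge i ∉ R) (T : List (Fin n)) :
    ((T.map fun t => R ++ [specialEdge t]).flatten ++ R).filterMap specIdx = T := by
  induction T with
  | nil => simpa using filterMap_specIdx_R hR
  | cons t T ih =>
    rw [List.map_cons, List.flatten_cons, List.append_assoc, List.filterMap_append, ih,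
      List.filterMap_append, filterMap_specIdx_R hR]
    simp [specIdx_special]

theorem stmt_13 (n : ℕ) (R : List (Vtx n × Vtx n))
    (hRe : ∀ f ∈ R, f.1 ≠ f.2)
    (hR : ∀ i : Fin n, specialEdge i ∉ R)
    (T : List (Fin n))
    (S : List (Vtx n × Vtx n))
    (hS : S = (T.map fun t => R ++ [specialEdge t]).flatten ++ R)
    (π : Equiv.Perm (Fin n))
    (hπ : ¬ (List.ofFn fun i => π i).Sublist T) :
    ¬ ((permPath n π).zip (permPath n π).tail).Sublist S ∧
    ¬ IsValidRelaxSeq (none : Vtx n) S := by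
  have hfS : S.filterMap specIdx = T := by
    rw [hS]; exact filterMap_specIdx_S hR T
  have key : ¬ ((permPath n π).zip (permPath n π).tail).Sublist S := by
    intro hsub
    apply hπ
    have h1 : ((List.ofFn fun i => π i).map specialEdge).Sublist
        ((permPath n π).zip (permPath n π).tail) := by
      have := path_edges_sublist (List.ofFn fun i => π i) (none : Vtx n)
      simpa [permPath, List.map_ofFn, Function.comp_def] using this
    have h2 := (h1.trans hsub).filterMap specIdx
    rw [hfS] at h2
    rw [List.filterMap_map] at h2
    have : (specIdx ∘ specialEdge : Fin n → Option (Fin n)) = some := by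
      funext i; exact specIdx_special i
    rwa [this, List.filterMap_some] at h2
  refine ⟨key, fun hval => key ?_⟩
  apply hval
  · simp [permPath]
  · simp [permPath]
  · rw [permPath, List.nodup_cons]
    constructor
    · simp [List.mem_flatten, List.mem_ofFn]
    · have : (List.ofFn fun i : Fin n =>
          ([some (Sum.inl (π i)), some (Sum.inr (π i))] : List (Vtx n))).flatten
          = (List.finRange n).flatMap
            fun i => ([some (Sum.inl (π i)), some (Sum.inr (π i))] : List (Vtx n)) := by
        rw [List.ofFn_eq_map, List.flatMap]
      rw [this, List.nodup_flatMap]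
      constructor
      · intro x _; simp
      · refine List.Pairwise.imp ?_ (List.nodup_finRange n)
        intro a b hab
        simp [Function.onFun, List.disjoint_iff_ne]
        intro hx; exact absurd hx hab
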